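/- For 0 \le i \le d one has F_i E^*_i F_i = F_i and E^*_i F_i E^*_i = E^*_i. -/

import Mathlib

/-- For `0 ≤ i ≤ d` one has `F_i E*_i F_i = F_i` and `E*_i F_i E*_i = E*_i`. -/
theorem stmt1 {F V : Type*} [Field F] [AddCommGroup V] [Module F V]
    [FiniteDimensional F V] [Nontrivial V] (d : ℕ) (hd : 1 ≤ d)
    (Es Fi : ℕ → Module.End F V)
    (hEsEs : ∀ i ≤ d, ∀ j ≤ d, Es i * Es j = if i = j then Es i else 0)
    (hFF : ∀ i ≤ d, ∀ j ≤ d, Fi i * Fi j = if i = j then Fi i else 0)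
    (hEssum : ∑ i ∈ Finset.range (d + 1), Es i = 1)
    (hFsum : ∑ i ∈ Finset.range (d + 1), Fi i = 1)
    (hFE : ∀ i j, i < j → j ≤ d → Fi j * Es i = 0)
    (hEF : ∀ i j, i < j → j ≤ d → Es j * Fi i = 0) :
    ∀ i ≤ d, Fi i * Es i * Fi i = Fi i ∧ Es i * Fi i * Es i = Es i := by
  intro i hi
  constructor
  · have h : Fi i * (∑ j ∈ Finset.range (d + 1), Es j) * Fi i = Fi i := by
      rw [hEssum, mul_one]
      simpa using hFF i hi i hi
    rw [Finset.mul_sum, Finset.sum_mul] at h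
    rw [Finset.sum_eq_single i] at h
    · exact h
    · intro j hj hne
      rcases lt_or_gt_of_ne hne with hlt | hgt
      · rw [hFE j i hlt hi, zero_mul]
      · rw [mul_assoc, hEF i j hgt (Nat.lt_succ_iff.mp (Finset.mem_range.mp hj)), mul_zero]
    · intro h'; exact absurd (Finset.mem_range.mpr (Nat.lt_succ_of_le hi)) h'
  · have h : Es i * (∑ j ∈ Finset.range (d + 1), Fi j) * Es i = Es i := by
      rw [hFsum, mul_one]
      simpa using hEsEs i hi i hi
    rw [Finset.mul_sum, Finset.sum_mul] at h
    rw [Finset.sum_eq_single i] at h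
    · exact h
    · intro j hj hne
      rcases lt_or_gt_of_ne hne with hlt | hgt
      · rw [hEF j i hlt hi, zero_mul]
      · rw [mul_assoc, hFE i j hgt (Nat.lt_succ_iff.mp (Finset.mem_range.mp hj)), mul_zero]
    · intro h'; exact absurd (Finset.mem_range.mpr (Nat.lt_succ_of_le hi)) h'
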